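/- arXiv:2602.03711 — 5 statements merged into one kernel-verified Lean document; each statement's English description precedes it below -/
import Mathlib

section
/- Let W > 0, Ξ1 > 0, Ξ3 > 0 and c > 0 be real constants. Then the function Θ(R) = c / (1 − exp(Ξ1 − Ξ3/(2^{R/W} − 1))) is convex on the open interval (0, W·log₂(1 + Ξ3/Ξ1)). -/
open Real

lemma key_ineq {w : ℝ} (hw : 0 ≤ w) :
    2 * (1 - Real.exp (-w)) ≤ w * (1 + Real.exp (-w)) := by
  set φ : ℝ → ℝ := fun t => t * (1 + Real.exp (-t)) - 2 * (1 - Real.exp (-t)) with hφ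
  have hd : ∀ t : ℝ, HasDerivAt φ (1 - (t + 1) * Real.exp (-t)) t := by
    intro t
    have h1 : HasDerivAt (fun t : ℝ => -t) (-1) t := (hasDerivAt_id t).neg
    have h2 : HasDerivAt (fun t : ℝ => Real.exp (-t)) (Real.exp (-t) * (-1)) t := h1.exp
    have h3 : HasDerivAt (fun t : ℝ => t * (1 + Real.exp (-t)))
        (1 * (1 + Real.exp (-t)) + t * (Real.exp (-t) * (-1))) t :=
      (hasDerivAt_id t).mul (h2.const_add 1)
    have h4 : HasDerivAt (fun t : ℝ => 2 * (1 - Real.exp (-t)))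
        (2 * (-(Real.exp (-t) * (-1)))) t := (h2.const_sub 1).const_mul 2
    have h5 : HasDerivAt φ _ t := h3.sub h4
    convert h5 using 1
    ring
  have hmono : MonotoneOn φ (Set.Ici 0) := by
    apply monotoneOn_of_deriv_nonneg (convex_Ici 0)
    · exact fun t _ => (hd t).continuousAt.continuousWithinAt
    · exact fun t _ => (hd t).differentiableAt.differentiableWithinAt
    · intro t ht
      rw [(hd t).deriv]
      have ht0 : 0 ≤ t := le_of_lt (by simpa using ht)
      have e1 : Real.exp t * Real.exp (-t) = 1 := by
        rw [← Real.exp_add]; simp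
      have e2 := Real.add_one_le_exp t
      have e3 := Real.exp_pos (-t)
      nlinarith
  have h0 : φ 0 = 0 := by simp [hφ]
  have := hmono Set.self_mem_Ici (show w ∈ Set.Ici 0 from hw) hw
  rw [h0] at this
  simpa [hφ, sub_nonneg] using this

noncomputable def Faux (A Ξ1 Ξ3 c : ℝ) : ℝ → ℝ := fun R =>
  c * Ξ3 * A * (Real.exp (Ξ1 - Ξ3 / (Real.exp (A * R) - 1)) * Real.exp (A * R)) /
    ((Real.exp (A * R) - 1) ^ 2 * (1 - Real.exp (Ξ1 - Ξ3 / (Real.exp (A * R) - 1))) ^ 2)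

lemma hasDerivAt_gaux (A Ξ1 Ξ3 c x : ℝ)
    (hv0 : Real.exp (A * x) - 1 ≠ 0)
    (hD0 : 1 - Real.exp (Ξ1 - Ξ3 / (Real.exp (A * x) - 1)) ≠ 0) :
    HasDerivAt (fun R : ℝ => c / (1 - Real.exp (Ξ1 - Ξ3 / (Real.exp (A * R) - 1))))
      (Faux A Ξ1 Ξ3 c x) x := by
  have hd1 : HasDerivAt (fun R : ℝ => A * R) A x := by
    simpa using (hasDerivAt_id x).const_mul A
  have hd2 : HasDerivAt (fun R : ℝ => Real.exp (A * R)) (Real.exp (A * x) * A) x := hd1.exp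
  have hd3 : HasDerivAt (fun R : ℝ => Real.exp (A * R) - 1) (Real.exp (A * x) * A) x :=
    hd2.sub_const 1
  have hd4 : HasDerivAt (fun R : ℝ => Ξ3 / (Real.exp (A * R) - 1)) _ x :=
    (hasDerivAt_const x Ξ3).div hd3 hv0
  have hd5 := hd4.const_sub Ξ1
  have hd6 := hd5.exp
  have hd7 := hd6.const_sub 1
  have hd8 : HasDerivAt (fun R : ℝ => c / (1 - Real.exp (Ξ1 - Ξ3 / (Real.exp (A * R) - 1)))) _ x :=
    (hasDerivAt_const x c).div hd7 hD0
  convert hd8 using 1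
  rw [Faux]
  generalize hqe : Real.exp (Ξ1 - Ξ3 / (Real.exp (A * x) - 1)) = Q
  rw [hqe] at hD0
  generalize hEe : Real.exp (A * x) = E
  rw [hEe] at hv0
  field_simp
  ring

lemma hasDerivAt_Faux (A Ξ1 Ξ3 c x : ℝ)
    (hv0 : Real.exp (A * x) - 1 ≠ 0)
    (hD0 : 1 - Real.exp (Ξ1 - Ξ3 / (Real.exp (A * x) - 1)) ≠ 0) :
    HasDerivAt (Faux A Ξ1 Ξ3 c)
      (c * Ξ3 * A ^ 2 * Real.exp (Ξ1 - Ξ3 / (Real.exp (A * x) - 1)) * Real.exp (A * x) *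
        ((1 + Real.exp (Ξ1 - Ξ3 / (Real.exp (A * x) - 1))) * (Ξ3 / (Real.exp (A * x) - 1)) * Real.exp (A * x)
          - (1 - Real.exp (Ξ1 - Ξ3 / (Real.exp (A * x) - 1))) * (Real.exp (A * x) + 1)) /
        ((Real.exp (A * x) - 1) ^ 3 * (1 - Real.exp (Ξ1 - Ξ3 / (Real.exp (A * x) - 1))) ^ 3)) x := by
  have hd1 : HasDerivAt (fun R : ℝ => A * R) A x := by
    simpa using (hasDerivAt_id x).const_mul A
  have hd2 : HasDerivAt (fun R : ℝ => Real.exp (A * R)) (Real.exp (A * x) * A) x := hd1.exp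
  have hd3 : HasDerivAt (fun R : ℝ => Real.exp (A * R) - 1) (Real.exp (A * x) * A) x :=
    hd2.sub_const 1
  have hd4 : HasDerivAt (fun R : ℝ => Ξ3 / (Real.exp (A * R) - 1)) _ x :=
    (hasDerivAt_const x Ξ3).div hd3 hv0
  have hd5 := hd4.const_sub Ξ1
  have hd6 := hd5.exp
  have hd7 := hd6.const_sub 1
  have hdN : HasDerivAt (fun R : ℝ => c * Ξ3 * A * (Real.exp (Ξ1 - Ξ3 / (Real.exp (A * R) - 1)) * Real.exp (A * R))) _ x :=
    (hd6.mul hd2).const_mul (c * Ξ3 * A)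
  have hdM : HasDerivAt (fun R : ℝ => (Real.exp (A * R) - 1) ^ 2 * (1 - Real.exp (Ξ1 - Ξ3 / (Real.exp (A * R) - 1))) ^ 2) _ x :=
    (show HasDerivAt (fun R : ℝ => (Real.exp (A * R) - 1) ^ 2) _ x from hd3.pow 2).mul (hd7.pow 2)
  have hM0 : (Real.exp (A * x) - 1) ^ 2 *
      (1 - Real.exp (Ξ1 - Ξ3 / (Real.exp (A * x) - 1))) ^ 2 ≠ 0 :=
    mul_ne_zero (pow_ne_zero 2 hv0) (pow_ne_zero 2 hD0)
  have hdF : HasDerivAt (Faux A Ξ1 Ξ3 c) _ x := hdN.div hdM hM0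
  convert hdF using 1
  generalize hqe : Real.exp (Ξ1 - Ξ3 / (Real.exp (A * x) - 1)) = Q
  rw [hqe] at hD0
  generalize hEe : Real.exp (A * x) = E
  rw [hEe] at hv0
  push_cast
  field_simp
  ring

set_option maxHeartbeats 1000000 in
theorem stmt_0 (W Ξ1 Ξ3 c : ℝ) (hW : 0 < W) (hΞ1 : 0 < Ξ1) (hΞ3 : 0 < Ξ3) (hc : 0 < c) :
    ConvexOn ℝ (Set.Ioo 0 (W * Real.logb 2 (1 + Ξ3 / Ξ1)))
      (fun R : ℝ => c / (1 - Real.exp (Ξ1 - Ξ3 / ((2 : ℝ) ^ (R / W) - 1)))) := by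
  have hlog2 : 0 < Real.log 2 := Real.log_pos one_lt_two
  have hApos : 0 < Real.log 2 / W := div_pos hlog2 hW
  set A : ℝ := Real.log 2 / W with hA
  set B : ℝ := W * Real.logb 2 (1 + Ξ3 / Ξ1) with hB
  have hfun : (fun R : ℝ => c / (1 - Real.exp (Ξ1 - Ξ3 / ((2 : ℝ) ^ (R / W) - 1))))
      = (fun R : ℝ => c / (1 - Real.exp (Ξ1 - Ξ3 / (Real.exp (A * R) - 1)))) := by
    funext R
    have : (2 : ℝ) ^ (R / W) = Real.exp (A * R) := by
      rw [Real.rpow_def_of_pos (by norm_num : (0:ℝ) < 2)]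
      congr 1
      rw [hA]; ring
    rw [this]
  rw [hfun]
  have hz : (0:ℝ) < 1 + Ξ3 / Ξ1 := by positivity
  have hAB : A * B = Real.log (1 + Ξ3 / Ξ1) := by
    rw [hA, hB, Real.logb]
    field_simp
  clear_value A B
  clear hA hB
  -- facts on the domain
  have facts : ∀ x ∈ Set.Ioo (0:ℝ) B, 1 < Real.exp (A * x) ∧
      Real.exp (A * x) - 1 < Ξ3 / Ξ1 ∧ Real.exp (Ξ1 - Ξ3 / (Real.exp (A * x) - 1)) < 1 := by
    intro x hx
    have hAx : 0 < A * x := mul_pos hApos hx.1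
    have hE : 1 < Real.exp (A * x) := by
      calc (1:ℝ) = Real.exp 0 := by simp
      _ < Real.exp (A * x) := Real.exp_lt_exp.mpr hAx
    have hvlt : Real.exp (A * x) - 1 < Ξ3 / Ξ1 := by
      have h1 : A * x < A * B := mul_lt_mul_of_pos_left hx.2 hApos
      rw [hAB] at h1
      have h2 : Real.exp (A * x) < 1 + Ξ3 / Ξ1 := by
        calc Real.exp (A * x) < Real.exp (Real.log (1 + Ξ3 / Ξ1)) := Real.exp_lt_exp.mpr h1
        _ = 1 + Ξ3 / Ξ1 := Real.exp_log hz
      linarith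
    refine ⟨hE, hvlt, ?_⟩
    have hvpos : 0 < Real.exp (A * x) - 1 := by linarith
    have hu : Ξ1 - Ξ3 / (Real.exp (A * x) - 1) < 0 := by
      have h1 : (Real.exp (A * x) - 1) * Ξ1 < Ξ3 := (lt_div_iff₀ hΞ1).mp hvlt
      have : Ξ1 < Ξ3 / (Real.exp (A * x) - 1) := by
        rw [lt_div_iff₀ hvpos]; nlinarith
      linarith
    calc Real.exp (Ξ1 - Ξ3 / (Real.exp (A * x) - 1)) < Real.exp 0 := Real.exp_lt_exp.mpr hu
    _ = 1 := Real.exp_zero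
  have hne : ∀ x ∈ Set.Ioo (0:ℝ) B, Real.exp (A * x) - 1 ≠ 0 ∧
      1 - Real.exp (Ξ1 - Ξ3 / (Real.exp (A * x) - 1)) ≠ 0 := by
    intro x hx
    obtain ⟨hE, _, hq1⟩ := facts x hx
    exact ⟨by intro h; nlinarith, by intro h; nlinarith⟩
  have hder : ∀ x ∈ Set.Ioo (0:ℝ) B,
      HasDerivAt (fun R : ℝ => c / (1 - Real.exp (Ξ1 - Ξ3 / (Real.exp (A * R) - 1))))
        (Faux A Ξ1 Ξ3 c x) x := by
    intro x hx
    obtain ⟨h1, h2⟩ := hne x hx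
    exact hasDerivAt_gaux A Ξ1 Ξ3 c x h1 h2
  apply convexOn_of_deriv2_nonneg (convex_Ioo 0 B)
  · exact fun x hx => (hder x hx).continuousAt.continuousWithinAt
  · rw [interior_Ioo]
    exact fun x hx => (hder x hx).differentiableAt.differentiableWithinAt
  · rw [interior_Ioo]
    intro x hx
    obtain ⟨h1, h2⟩ := hne x hx
    have hev : deriv (fun R : ℝ => c / (1 - Real.exp (Ξ1 - Ξ3 / (Real.exp (A * R) - 1))))
        =ᶠ[nhds x] Faux A Ξ1 Ξ3 c := by
      filter_upwards [isOpen_Ioo.mem_nhds hx] with y hy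
      exact (hder y hy).deriv
    exact ((hasDerivAt_Faux A Ξ1 Ξ3 c x h1 h2).differentiableAt.congr_of_eventuallyEq
      hev).differentiableWithinAt
  · rw [interior_Ioo]
    intro x hx
    obtain ⟨h1, h2⟩ := hne x hx
    have hev : deriv (fun R : ℝ => c / (1 - Real.exp (Ξ1 - Ξ3 / (Real.exp (A * R) - 1))))
        =ᶠ[nhds x] Faux A Ξ1 Ξ3 c := by
      filter_upwards [isOpen_Ioo.mem_nhds hx] with y hy
      exact (hder y hy).deriv
    have h2d : deriv^[2] (fun R : ℝ => c / (1 - Real.exp (Ξ1 - Ξ3 / (Real.exp (A * R) - 1)))) x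
        = deriv (Faux A Ξ1 Ξ3 c) x := by
      show deriv (deriv _) x = _
      exact hev.deriv_eq
    rw [h2d, (hasDerivAt_Faux A Ξ1 Ξ3 c x h1 h2).deriv]
    obtain ⟨hE, hvlt, hq1⟩ := facts x hx
    have hvpos : 0 < Real.exp (A * x) - 1 := by linarith
    have hq0 : 0 < Real.exp (Ξ1 - Ξ3 / (Real.exp (A * x) - 1)) := Real.exp_pos _
    have hDpos : 0 < 1 - Real.exp (Ξ1 - Ξ3 / (Real.exp (A * x) - 1)) := by linarith
    have hbr : 0 ≤ (1 + Real.exp (Ξ1 - Ξ3 / (Real.exp (A * x) - 1))) *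
        (Ξ3 / (Real.exp (A * x) - 1)) * Real.exp (A * x)
        - (1 - Real.exp (Ξ1 - Ξ3 / (Real.exp (A * x) - 1))) * (Real.exp (A * x) + 1) := by
      set E := Real.exp (A * x) with hEdef
      set q := Real.exp (Ξ1 - Ξ3 / (E - 1)) with hqdef
      set s : ℝ := Ξ3 / (E - 1) with hs
      have hspos : 0 < s := div_pos hΞ3 hvpos
      have hw : 0 ≤ s - Ξ1 := by
        have hA1 : (E - 1) * Ξ1 < Ξ3 := (lt_div_iff₀ hΞ1).mp hvlt
        have : Ξ1 < s := by
          rw [hs, lt_div_iff₀ hvpos]; nlinarith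
        linarith
      have hkey := key_ineq hw
      have hexp : Real.exp (-(s - Ξ1)) = q := by
        rw [hqdef, hs]; congr 1; ring
      rw [hexp] at hkey
      nlinarith [mul_le_mul_of_nonneg_right hkey (le_of_lt (lt_trans one_pos hE)),
        mul_nonneg (mul_nonneg hΞ1.le (by linarith : (0:ℝ) ≤ 1 + q)) (by linarith : (0:ℝ) ≤ E),
        mul_nonneg (by linarith : (0:ℝ) ≤ 1 - q) (by linarith : (0:ℝ) ≤ E - 1)]
    apply div_nonneg
    · exact mul_nonneg (by positivity) hbr
    · positivity
end

section
/- Let W > 0 be a real constant. Then the function g(R) = exp(−(2^{R/W} − 1)) is convex on the interval [0, ∞). -/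
open Real

private lemma hasDerivAt_g (c x : ℝ) :
    HasDerivAt (fun R => Real.exp (1 - Real.exp (c * R)))
      (Real.exp (1 - Real.exp (c * x)) * (-(c * Real.exp (c * x)))) x := by
  have h1 : HasDerivAt (fun R : ℝ => c * R) c x := by
    simpa using (hasDerivAt_id x).const_mul c
  have h2 : HasDerivAt (fun R : ℝ => Real.exp (c * R)) (Real.exp (c * x) * c) x :=
    (Real.hasDerivAt_exp (c * x)).comp x h1
  have h3 : HasDerivAt (fun R : ℝ => 1 - Real.exp (c * R)) (-(c * Real.exp (c * x))) x := by
    simpa [mul_comm] using h2.const_sub 1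
  exact (Real.hasDerivAt_exp (1 - Real.exp (c * x))).comp x h3

private lemma deriv_g (c : ℝ) :
    deriv (fun R => Real.exp (1 - Real.exp (c * R)))
      = fun x => Real.exp (1 - Real.exp (c * x)) * (-(c * Real.exp (c * x))) := by
  funext x
  exact (hasDerivAt_g c x).deriv

private lemma convexOn_g (c : ℝ) (hc : 0 ≤ c) :
    ConvexOn ℝ (Set.Ici 0) (fun R => Real.exp (1 - Real.exp (c * R))) := by
  apply convexOn_of_deriv2_nonneg (convex_Ici 0)
  · exact (Real.continuous_exp.comp (by continuity)).continuousOn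
  · intro x hx
    exact (hasDerivAt_g c x).differentiableAt.differentiableWithinAt
  · intro x hx
    rw [deriv_g]
    have h1 : HasDerivAt (fun R : ℝ => Real.exp (c * R)) (Real.exp (c * x) * c) x :=
      (Real.hasDerivAt_exp (c * x)).comp x (by simpa using (hasDerivAt_id x).const_mul c)
    have := ((hasDerivAt_g c x).mul ((h1.const_mul c).neg))
    exact this.differentiableAt.differentiableWithinAt
  · intro x hx
    rw [interior_Ici] at hx
    simp only [Function.iterate_succ, Function.iterate_zero, Function.comp, id]
    rw [deriv_g]
    have h1 : HasDerivAt (fun R : ℝ => Real.exp (c * R)) (Real.exp (c * x) * c) x :=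
      (Real.hasDerivAt_exp (c * x)).comp x (by simpa using (hasDerivAt_id x).const_mul c)
    have hd : HasDerivAt (fun x => Real.exp (1 - Real.exp (c * x)) * -(c * Real.exp (c * x)))
        (Real.exp (1 - Real.exp (c * x)) * (-(c * Real.exp (c * x))) *
            (-(c * Real.exp (c * x))) +
          Real.exp (1 - Real.exp (c * x)) * -(c * (Real.exp (c * x) * c))) x :=
      (hasDerivAt_g c x).mul ((h1.const_mul c).neg)
    rw [hd.deriv]
    have hE : (1 : ℝ) ≤ Real.exp (c * x) := by
      rw [← Real.exp_zero]
      exact Real.exp_le_exp.mpr (mul_nonneg hc (le_of_lt hx))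
    have key : Real.exp (1 - Real.exp (c * x)) * (-(c * Real.exp (c * x))) *
          (-(c * Real.exp (c * x))) +
        Real.exp (1 - Real.exp (c * x)) * -(c * (Real.exp (c * x) * c))
        = Real.exp (1 - Real.exp (c * x)) * (c ^ 2 * Real.exp (c * x)) *
            (Real.exp (c * x) - 1) := by ring
    rw [key]
    have := Real.exp_pos (1 - Real.exp (c * x))
    exact mul_nonneg (by positivity) (by linarith)

theorem stmt_1 (W : ℝ) (hW : 0 < W) :
    ConvexOn ℝ (Set.Ici 0)
      (fun R : ℝ => Real.exp (-((2 : ℝ) ^ (R / W) - 1))) := by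
  have hc : (0 : ℝ) ≤ Real.log 2 / W :=
    div_nonneg (Real.log_nonneg one_le_two) hW.le
  have := convexOn_g (Real.log 2 / W) hc
  convert this using 2 with R
  rw [Real.rpow_def_of_pos (by norm_num : (0:ℝ) < 2)]
  ring_nf
end

section
/- Let Ξ1 > 0 and Ξ3 > 0 be real constants and define, for f in the open interval (1, 1 + Ξ3/Ξ1), e(f) = exp(Ξ1 − Ξ3/(f − 1)) and Λ(f) = (f/(f² − 1))·(1 + e(f))/(1 − e(f)) − 1/Ξ3. Then Λ(f) tends to +∞ as f tends to 1 + Ξ3/Ξ1 from the left (within the interval). -/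
open Filter Real Set

theorem stmt_12 (Ξ1 Ξ3 : ℝ) (hΞ1 : 0 < Ξ1) (hΞ3 : 0 < Ξ3) :
    Filter.Tendsto
      (fun f : ℝ =>
        (f / (f ^ 2 - 1)) * ((1 + Real.exp (Ξ1 - Ξ3 / (f - 1))) /
          (1 - Real.exp (Ξ1 - Ξ3 / (f - 1)))) - 1 / Ξ3)
      (nhdsWithin (1 + Ξ3 / Ξ1) (Set.Ioo 1 (1 + Ξ3 / Ξ1))) Filter.atTop := by
  set c : ℝ := 1 + Ξ3 / Ξ1 with hc
  have hq : 0 < Ξ3 / Ξ1 := div_pos hΞ3 hΞ1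
  have hc1 : 1 < c := by simp [hc]; linarith
  have hcm : c - 1 = Ξ3 / Ξ1 := by simp [hc]
  have hcm0 : c - 1 ≠ 0 := by rw [hcm]; exact ne_of_gt hq
  set l := nhdsWithin c (Set.Ioo 1 c) with hl
  have hf : Tendsto (fun f : ℝ => f) l (nhds c) := tendsto_id.mono_left nhdsWithin_le_nhds
  have h1 : Tendsto (fun f : ℝ => f - 1) l (nhds (c - 1)) := hf.sub_const 1
  have hEkey : Ξ1 - Ξ3 / (c - 1) = 0 := by
    rw [hcm]; field_simp; ring
  have hE : Tendsto (fun f : ℝ => Ξ1 - Ξ3 / (f - 1)) l (nhds 0) := by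
    have := (tendsto_const_nhds (x := Ξ3) (f := l)).div h1 hcm0
    have h2 := (tendsto_const_nhds (x := Ξ1) (f := l)).sub this
    rwa [hEkey] at h2
  have he : Tendsto (fun f : ℝ => Real.exp (Ξ1 - Ξ3 / (f - 1))) l (nhds 1) := by
    have := Real.continuous_exp.continuousAt.tendsto.comp hE
    simpa [Function.comp_def] using this
  -- eventually exponent negative
  have hneg : ∀ᶠ f in l, Real.exp (Ξ1 - Ξ3 / (f - 1)) < 1 := by
    filter_upwards [self_mem_nhdsWithin] with f hfm
    have hf1 : (1 : ℝ) < f := hfm.1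
    have hfc : f < c := hfm.2
    have hfpos : 0 < f - 1 := by linarith
    have : Ξ1 < Ξ3 / (f - 1) := by
      rw [lt_div_iff₀ hfpos]
      have : Ξ1 * (c - 1) = Ξ3 := by rw [hcm]; field_simp
      nlinarith
    have : Ξ1 - Ξ3 / (f - 1) < 0 := by linarith
    calc Real.exp (Ξ1 - Ξ3 / (f - 1)) < Real.exp 0 := Real.exp_lt_exp.2 this
      _ = 1 := Real.exp_zero
  have hden : Tendsto (fun f : ℝ => 1 - Real.exp (Ξ1 - Ξ3 / (f - 1))) l (nhdsWithin 0 (Set.Ioi 0)) := by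
    rw [tendsto_nhdsWithin_iff]
    constructor
    · have := (tendsto_const_nhds (x := (1:ℝ)) (f := l)).sub he
      simpa using this
    · filter_upwards [hneg] with f hf
      exact Set.mem_Ioi.2 (by linarith)
  have hinv : Tendsto (fun f : ℝ => (1 - Real.exp (Ξ1 - Ξ3 / (f - 1)))⁻¹) l atTop :=
    tendsto_inv_nhdsGT_zero.comp hden
  have hcoef : Tendsto (fun f : ℝ => (f / (f ^ 2 - 1)) * (1 + Real.exp (Ξ1 - Ξ3 / (f - 1))))
      l (nhds ((c / (c ^ 2 - 1)) * 2)) := by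
    have hc2 : c ^ 2 - 1 ≠ 0 := by nlinarith
    have h2 : Tendsto (fun f : ℝ => f / (f ^ 2 - 1)) l (nhds (c / (c ^ 2 - 1))) :=
      hf.div ((hf.pow 2).sub_const 1) hc2
    have h3 : Tendsto (fun f : ℝ => 1 + Real.exp (Ξ1 - Ξ3 / (f - 1))) l (nhds 2) := by
      have := (tendsto_const_nhds (x := (1:ℝ)) (f := l)).add he
      have h21 : (2:ℝ) = 1 + 1 := by norm_num
      rw [h21]; exact this
    exact h2.mul h3
  have hCpos : 0 < (c / (c ^ 2 - 1)) * 2 := by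
    have : 0 < c ^ 2 - 1 := by nlinarith
    positivity
  have hmain : Tendsto (fun f : ℝ =>
      ((f / (f ^ 2 - 1)) * (1 + Real.exp (Ξ1 - Ξ3 / (f - 1)))) *
        (1 - Real.exp (Ξ1 - Ξ3 / (f - 1)))⁻¹) l atTop :=
    hcoef.pos_mul_atTop hCpos hinv
  have hmain2 : Tendsto (fun f : ℝ =>
      (f / (f ^ 2 - 1)) * ((1 + Real.exp (Ξ1 - Ξ3 / (f - 1))) /
        (1 - Real.exp (Ξ1 - Ξ3 / (f - 1))))) l atTop := by
    refine hmain.congr fun f => ?_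
    simp [div_eq_mul_inv, mul_assoc]
  have := tendsto_atTop_add_const_right l (-(1 / Ξ3)) hmain2
  simpa [sub_eq_add_neg] using this
end

section
/- Let Ξ1 > 0 and Ξ3 > 0 be real constants and define, for f in the open interval (1, 1 + Ξ3/Ξ1), e(f) = exp(Ξ1 − Ξ3/(f − 1)) and Λ(f) = (f/(f² − 1))·(1 + e(f))/(1 − e(f)) − 1/Ξ3. Then Λ(f) > 0 for every f in the open interval (1, 1 + Ξ3/Ξ1). -/
lemma key_ineq_s13 (x : ℝ) (hx : 0 < x) :
    2 * (1 - Real.exp (-x)) < x * (1 + Real.exp (-x)) := by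
  set g : ℝ → ℝ := fun y => y - 2 + (y + 2) * Real.exp (-y) with hg
  have hd : ∀ y : ℝ, HasDerivAt g (1 - (y + 1) * Real.exp (-y)) y := by
    intro y
    have h1 : HasDerivAt (fun y : ℝ => Real.exp (-y)) (-Real.exp (-y)) y := by
      simpa [Function.comp_def] using (Real.hasDerivAt_exp (-y)).comp y (hasDerivAt_neg y)
    have h2 : HasDerivAt (fun y : ℝ => (y + 2) * Real.exp (-y))
        (1 * Real.exp (-y) + (y + 2) * (-Real.exp (-y))) y :=
      (((hasDerivAt_id y).add_const 2)).mul h1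
    have h3 : HasDerivAt (fun y : ℝ => y - 2) 1 y := (hasDerivAt_id y).sub_const 2
    have := h3.add h2
    exact this.congr_deriv (by ring)
  have hmono : StrictMonoOn g (Set.Ici (0 : ℝ)) := by
    apply strictMonoOn_of_deriv_pos (convex_Ici 0)
    · exact (Continuous.add (by continuity) (by continuity)).continuousOn
    · intro y hy
      rw [interior_Ici] at hy
      rw [(hd y).deriv]
      have hey : (y + 1) * Real.exp (-y) < 1 := by
        have h1 : y + 1 < Real.exp y := Real.add_one_lt_exp (ne_of_gt hy)
        have h2 := mul_lt_mul_of_pos_right h1 (Real.exp_pos (-y))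
        rwa [← Real.exp_add, add_neg_cancel, Real.exp_zero] at h2
      linarith
  have h0 : g 0 = 0 := by simp [hg]
  have hgx : 0 < g x := by
    have := hmono (Set.self_mem_Ici) (Set.mem_Ici.mpr hx.le) hx
    rwa [h0] at this
  simp only [hg] at hgx
  nlinarith [Real.exp_pos (-x)]

theorem stmt_13 (Ξ1 Ξ3 : ℝ) (hΞ1 : 0 < Ξ1) (hΞ3 : 0 < Ξ3) :
    ∀ f ∈ Set.Ioo (1 : ℝ) (1 + Ξ3 / Ξ1),
      (f / (f ^ 2 - 1)) * ((1 + Real.exp (Ξ1 - Ξ3 / (f - 1))) /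
        (1 - Real.exp (Ξ1 - Ξ3 / (f - 1)))) - 1 / Ξ3 > 0 := by
  rintro f ⟨hf1, hf2⟩
  have hf1' : 0 < f - 1 := by linarith
  have hq : f - 1 < Ξ3 / Ξ1 := by linarith
  have hq2 : Ξ1 * (f - 1) < Ξ3 := by
    have := mul_lt_mul_of_pos_left hq hΞ1
    rwa [mul_div_cancel₀ Ξ3 (ne_of_gt hΞ1)] at this
  set x : ℝ := Ξ3 / (f - 1) - Ξ1 with hxdef
  have hx : 0 < x := by
    have : Ξ1 < Ξ3 / (f - 1) := by rw [lt_div_iff₀ hf1']; linarith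
    simp only [hxdef]; linarith
  have hxe : Ξ1 - Ξ3 / (f - 1) = -x := by rw [hxdef]; ring
  rw [hxe]
  set e : ℝ := Real.exp (-x) with hedef
  have he0 : 0 < e := Real.exp_pos _
  have he1 : e < 1 := by
    rw [hedef, Real.exp_lt_one_iff]; linarith
  have hkey : 2 * (1 - e) < x * (1 + e) := key_ineq_s13 x hx
  have hf2pos : 0 < f ^ 2 - 1 := by nlinarith
  have h1e : 0 < 1 - e := by linarith
  rw [gt_iff_lt, sub_pos, div_mul_div_comm, div_lt_div_iff₀ hΞ3 (by positivity)]
  -- goal: 1 * ((f^2-1)*(1-e)) < f*(1+e)*Ξ3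
  have hxeq : x * (f - 1) = Ξ3 - Ξ1 * (f - 1) := by
    rw [hxdef, sub_mul, div_mul_cancel₀ _ (ne_of_gt hf1')]
  nlinarith [mul_lt_mul_of_pos_left hkey (mul_pos (by linarith : (0:ℝ) < f + 1) hf1'),
    mul_pos (mul_pos hf1' hΞ3) he0, mul_pos (mul_pos hf1' hf1') (mul_pos hΞ1 (by linarith : (0:ℝ) < 1 + e))]
end

section
/- Let W > 0, Ξ1 > 0 and Ξ3 > 0 be real constants. Then for every f in the open interval (1, 1 + Ξ3/Ξ1), setting e = exp(Ξ1 − Ξ3/(f − 1)), the following strict inequality holds: (Ξ3·(ln 2 / W)·f/(f − 1)²)²·(1 + e) − Ξ3·(ln 2 / W)²·f·(f + 1)/(f − 1)³·(1 − e) > 0. -/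
lemma aux_one_sub_mul_exp_lt (x : ℝ) (hx : 0 < x) : (1 - x) * Real.exp x < 1 := by
  have h := Real.add_one_lt_exp (x := -x) (by linarith)
  have hmul : Real.exp (-x) * Real.exp x = 1 := by
    rw [← Real.exp_add]; simp
  nlinarith [Real.exp_pos x]

lemma aux_pade (u : ℝ) (hu : 0 < u) : (2 - u) * Real.exp u < 2 + u := by
  have key : StrictMonoOn (fun u : ℝ => 2 + u - (2 - u) * Real.exp u) (Set.Ici 0) := by
    apply strictMonoOn_of_deriv_pos (convex_Ici 0)
    · fun_prop
    · intro x hx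
      rw [interior_Ici] at hx
      have hx0 : 0 < x := hx
      have h1 : HasDerivAt (fun u : ℝ => 2 + u - (2 - u) * Real.exp u)
          (1 - ((-1) * Real.exp x + (2 - x) * Real.exp x)) x := by
        have hd : HasDerivAt (fun u : ℝ => 2 + u) (0 + 1) x :=
          (hasDerivAt_const x 2).add (hasDerivAt_id x)
        have hd2 : HasDerivAt (fun u : ℝ => (2 - u) * Real.exp u)
            ((0 - 1) * Real.exp x + (2 - x) * Real.exp x) x :=
          ((hasDerivAt_const x 2).sub (hasDerivAt_id x)).mul (Real.hasDerivAt_exp x)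
        have := hd.sub hd2
        exact this.congr_deriv (by ring)
      rw [h1.deriv]
      have hA := aux_one_sub_mul_exp_lt x hx0
      nlinarith
  have h := key (Set.self_mem_Ici) (Set.mem_Ici.mpr hu.le) hu
  simp only [Real.exp_zero] at h
  nlinarith

theorem stmt_14 (W Ξ1 Ξ3 : ℝ) (hW : 0 < W) (hΞ1 : 0 < Ξ1) (hΞ3 : 0 < Ξ3) :
    ∀ f ∈ Set.Ioo (1 : ℝ) (1 + Ξ3 / Ξ1),
      (Ξ3 * (Real.log 2 / W) * f / (f - 1) ^ 2) ^ 2 *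
          (1 + Real.exp (Ξ1 - Ξ3 / (f - 1))) -
        Ξ3 * (Real.log 2 / W) ^ 2 * (f * (f + 1)) / (f - 1) ^ 3 *
          (1 - Real.exp (Ξ1 - Ξ3 / (f - 1))) > 0 := by
  rintro f ⟨h1, h2⟩
  have ht : 0 < f - 1 := by linarith
  set s : ℝ := Ξ3 / (f - 1) with hs_def
  have hst : s * (f - 1) = Ξ3 := div_mul_cancel₀ _ (ne_of_gt ht)
  have hs_pos : 0 < s := div_pos hΞ3 ht
  -- Ξ1 < s
  have hΞ1s : Ξ1 < s := by
    have h3 : f - 1 < Ξ3 / Ξ1 := by linarith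
    have h4 : (f - 1) * Ξ1 < Ξ3 := (lt_div_iff₀ hΞ1).mp h3
    rw [hs_def, lt_div_iff₀ ht]
    nlinarith
  set E : ℝ := Real.exp (Ξ1 - s) with hE_def
  have hE0 : 0 < E := Real.exp_pos _
  have hE1 : E < 1 := by
    rw [hE_def, Real.exp_lt_one_iff]; linarith
  -- key: (2+s) * E > 2 - s
  have hkey : 2 - s < (2 + s) * E := by
    have hEs : Real.exp (-s) < E := by
      rw [hE_def]; exact Real.exp_lt_exp.mpr (by linarith)
    rcases le_or_gt 2 s with hs2 | hs2
    · nlinarith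
    · have hp := aux_pade s hs_pos
      have hmul : Real.exp (-s) * Real.exp s = 1 := by rw [← Real.exp_add]; simp
      have h5 : (2 - s) < (2 + s) * Real.exp (-s) := by
        nlinarith [Real.exp_pos s, Real.exp_pos (-s)]
      nlinarith
  -- derived: (1+s) * E > 1 - s
  have hkey2 : 1 - s < (1 + s) * E := by nlinarith
  -- inner bracket positivity
  have hA : 0 < s + s * E + E - 1 := by nlinarith
  have hinner : 0 < s * f * (1 + E) - (f + 1) * (1 - E) := by
    nlinarith [mul_pos (sub_pos.mpr h1) hA]
  -- rewrite the goal
  have hL : 0 < Real.log 2 / W := div_pos (Real.log_pos one_lt_two) hW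
  have heq : (Ξ3 * (Real.log 2 / W) * f / (f - 1) ^ 2) ^ 2 * (1 + E) -
        Ξ3 * (Real.log 2 / W) ^ 2 * (f * (f + 1)) / (f - 1) ^ 3 * (1 - E) =
      ((Real.log 2 / W) ^ 2 * f / (f - 1) ^ 2) *
        ((s * f * (1 + E) - (f + 1) * (1 - E)) * s) := by
    rw [← hst]
    field_simp
  rw [heq]
  have hfpos : 0 < f := by linarith
  positivity
end
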